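/- Let κ > 0 and τ ≠ 0, and set λ(x,y) = (1 + (κ/4)(x²+y²))⁻¹. The composition of the Hopf fibration with the covering map Θ depends only on (x,y) and is given explicitly by π(Θ(x,y,z)) = (λ(x,y)·(y + i·x), λ(x,y)·((κ/4)(x²+y²) − 1)/√κ) for all (x,y,z) ∈ ℝ³. In particular Θ maps each vertical line {(x,y)} × ℝ into a single Hopf fiber. -/

import Mathlib

/-- The Hopf fibration `π : ℂ² → ℂ × ℝ` associated with `κ > 0`,
`π(z,w) = ((2/√κ)·z·conj(w), (|z|² − |w|²)/√κ)`. -/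
noncomputable def hopf (κ : ℝ) (p : ℂ × ℂ) : ℂ × ℝ :=
  (((2 / Real.sqrt κ : ℝ) : ℂ) * (p.1 * (starRingEnd ℂ) p.2),
    (‖p.1‖ ^ 2 - ‖p.2‖ ^ 2) / Real.sqrt κ)

/-- The conformal factor of the Cartan model, `λ(x,y) = (1 + (κ/4)(x²+y²))⁻¹`. -/
noncomputable def lam (κ x y : ℝ) : ℝ := (1 + κ / 4 * (x ^ 2 + y ^ 2))⁻¹

/-- The covering map `Θ : ℝ³ → ℂ²` onto the Berger sphere minus a fiber,
`Θ(x,y,z) = (1 + (κ/4)(x²+y²))^{−1/2} ((√κ/2)(y+ix)e^{iκz/(4τ)}, e^{iκz/(4τ)})`. -/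
noncomputable def ThetaBerger (κ τ : ℝ) (p : ℝ × ℝ × ℝ) : ℂ × ℂ :=
  (((Real.sqrt (1 + κ / 4 * (p.1 ^ 2 + p.2.1 ^ 2)))⁻¹ : ℂ) *
      (((Real.sqrt κ / 2 : ℝ) : ℂ) * ((p.2.1 : ℂ) + (p.1 : ℂ) * Complex.I)) *
      Complex.exp (Complex.I * ((κ * p.2.2 / (4 * τ) : ℝ) : ℂ)),
   ((Real.sqrt (1 + κ / 4 * (p.1 ^ 2 + p.2.1 ^ 2)))⁻¹ : ℂ) *
      Complex.exp (Complex.I * ((κ * p.2.2 / (4 * τ) : ℝ) : ℂ)))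

/-- The composition of the Hopf fibration with `Θ` depends only on `(x,y)`:
`π(Θ(x,y,z)) = (λ(x,y)(y+ix), λ(x,y)((κ/4)(x²+y²) − 1)/√κ)`. In particular `Θ`
maps each vertical line into a single Hopf fiber. -/
theorem hopf_comp_thetaBerger (κ τ : ℝ) (hκ : 0 < κ) (hτ : τ ≠ 0) (x y z : ℝ) :
    hopf κ (ThetaBerger κ τ (x, y, z)) =
      (((lam κ x y : ℝ) : ℂ) * ((y : ℂ) + (x : ℂ) * Complex.I),
        lam κ x y * (κ / 4 * (x ^ 2 + y ^ 2) - 1) / Real.sqrt κ) := by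
  have hs : (0:ℝ) < 1 + κ / 4 * (x ^ 2 + y ^ 2) := by positivity
  have hss : Real.sqrt (1 + κ / 4 * (x ^ 2 + y ^ 2)) ≠ 0 := by positivity
  have hsq : Real.sqrt (1 + κ / 4 * (x ^ 2 + y ^ 2)) ^ 2 = 1 + κ / 4 * (x ^ 2 + y ^ 2) :=
    Real.sq_sqrt hs.le
  have hκ' : Real.sqrt κ ≠ 0 := by positivity
  have hκsq : Real.sqrt κ ^ 2 = κ := Real.sq_sqrt hκ.le
  set E : ℂ := Complex.exp (Complex.I * ((κ * z / (4 * τ) : ℝ) : ℂ)) with hE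
  have habsE : ‖E‖ = 1 := by
    have : (Complex.I * ((κ * z / (4 * τ) : ℝ) : ℂ)).re = 0 := by
      simp only [Complex.mul_re, Complex.I_re, Complex.I_im, Complex.ofReal_re,
        Complex.ofReal_im]
      ring
    rw [hE, Complex.norm_exp, this, Real.exp_zero]
  have hEconj : E * (starRingEnd ℂ) E = 1 := by
    rw [Complex.mul_conj, Complex.normSq_eq_norm_sq, habsE]; norm_num
  simp only [hopf, ThetaBerger, lam, Prod.mk.injEq]
  constructor
  · simp only [← hE]
    rw [map_mul, map_inv₀, Complex.conj_ofReal]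
    have h2' : ((2 / Real.sqrt κ : ℝ) : ℂ) * ((Real.sqrt κ / 2 : ℝ) : ℂ) = 1 := by
      norm_cast; field_simp
    have h1' : (((Real.sqrt (1 + κ / 4 * (x ^ 2 + y ^ 2)))⁻¹ : ℝ) : ℂ) *
        (((Real.sqrt (1 + κ / 4 * (x ^ 2 + y ^ 2)))⁻¹ : ℝ) : ℂ) =
        (((1 + κ / 4 * (x ^ 2 + y ^ 2))⁻¹ : ℝ) : ℂ) := by
      norm_cast
      rw [← mul_inv, Real.mul_self_sqrt hs.le]
    simp only [← Complex.ofReal_inv] at *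
    linear_combination
      (((y:ℂ) + x * Complex.I) * ((((Real.sqrt (1 + κ / 4 * (x ^ 2 + y ^ 2)))⁻¹ : ℝ) : ℂ)) *
          ((((Real.sqrt (1 + κ / 4 * (x ^ 2 + y ^ 2)))⁻¹ : ℝ) : ℂ)) * (E * (starRingEnd ℂ) E)) * h2' +
      (((y:ℂ) + x * Complex.I) * ((((Real.sqrt (1 + κ / 4 * (x ^ 2 + y ^ 2)))⁻¹ : ℝ) : ℂ)) *
          ((((Real.sqrt (1 + κ / 4 * (x ^ 2 + y ^ 2)))⁻¹ : ℝ) : ℂ))) * hEconj +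
      ((y:ℂ) + x * Complex.I) * h1'
  · have h1 : |Real.sqrt (1 + κ / 4 * (x ^ 2 + y ^ 2))| = Real.sqrt (1 + κ / 4 * (x ^ 2 + y ^ 2)) :=
      abs_of_nonneg (Real.sqrt_nonneg _)
    have h2 : |Real.sqrt κ / 2| = Real.sqrt κ / 2 := abs_of_nonneg (by positivity)
    have h3 : ‖(y:ℂ) + (x:ℂ) * Complex.I‖ ^ 2 = y ^ 2 + x ^ 2 := by
      rw [Complex.sq_norm, Complex.normSq_add_mul_I]
    simp only [← hE, norm_mul, norm_inv, Complex.norm_real, Real.norm_eq_abs, habsE, h1, h2, mul_one, mul_pow, h3]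
    field_simp
    rw [Real.sq_sqrt (by positivity), Real.sq_sqrt (by positivity)]
    ring
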